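/- Let T : S_n(ℝ) → S_n(ℝ) be a linear transformation such that T(A) is positive definite whenever A is positive definite. Then the following are equivalent: (i) for every A ∈ S_n(ℝ), if T(A) is positive definite then A is positive definite; (ii) for every A ∈ S_n(ℝ), if T(A) is invertible then A is invertible. -/

import Mathlib

open Matrix

/-- The space `Sₙ(ℝ)` of `n × n` real symmetric matrices, as a submodule of the space of
all `n × n` real matrices. -/
def SymMat (n : ℕ) : Submodule ℝ (Matrix (Fin n) (Fin n) ℝ) where
  carrier := {A | A.IsSymm}
  add_mem' := fun ha hb => ha.add hb
  zero_mem' := by simp [Matrix.IsSymm]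
  smul_mem' := fun c _ hA => hA.smul c

namespace Stmt10Aux

open Polynomial

variable {n : ℕ}

lemma nonneg_of_forall_pos (a b : ℝ) (h : ∀ s : ℝ, 0 < s → 0 < a + s * b) : 0 ≤ a := by
  by_contra hc
  push_neg at hc
  rcases le_or_gt b 0 with hb | hb
  · have := h 1 one_pos; nlinarith
  · have h2 := h (-a / (2 * b)) (div_pos (by linarith) (by linarith))
    have e : a + -a / (2 * b) * b = a / 2 := by field_simp; ring
    rw [e] at h2; linarith

lemma isHermitian_of_isSymm {A : Matrix (Fin n) (Fin n) ℝ} (h : A.IsSymm) : A.IsHermitian := by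
  rwa [Matrix.IsHermitian, conjTranspose_eq_transpose_of_trivial]

lemma isSymm_of_isHermitian {A : Matrix (Fin n) (Fin n) ℝ} (h : A.IsHermitian) : A.IsSymm := by
  rwa [Matrix.IsHermitian, conjTranspose_eq_transpose_of_trivial] at h

lemma posDef_smul {M : Matrix (Fin n) (Fin n) ℝ} (hM : M.PosDef) {t : ℝ} (ht : 0 < t) :
    (t • M).PosDef := by
  refine Matrix.PosDef.of_dotProduct_mulVec_pos ?_ (fun x hx => ?_)
  · rw [Matrix.IsHermitian, conjTranspose_smul, star_trivial, hM.1.eq]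
  · rw [smul_mulVec, dotProduct_smul, smul_eq_mul]
    exact mul_pos ht (hM.dotProduct_mulVec_pos hx)

lemma posSemidef_smul {M : Matrix (Fin n) (Fin n) ℝ} (hM : M.PosSemidef) {t : ℝ} (ht : 0 ≤ t) :
    (t • M).PosSemidef := by
  refine Matrix.PosSemidef.of_dotProduct_mulVec_nonneg ?_ (fun x => ?_)
  · rw [Matrix.IsHermitian, conjTranspose_smul, star_trivial, hM.1.eq]
  · rw [smul_mulVec, dotProduct_smul, smul_eq_mul]
    exact mul_nonneg ht (hM.dotProduct_mulVec_nonneg x)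

lemma posDef_of_posSemidef_det_ne_zero {M : Matrix (Fin n) (Fin n) ℝ} (hM : M.PosSemidef)
    (hd : M.det ≠ 0) : M.PosDef := by
  refine Matrix.PosDef.of_dotProduct_mulVec_pos hM.1 (fun x hx => ?_)
  rcases lt_or_eq_of_le (hM.dotProduct_mulVec_nonneg x) with h | h
  · exact h
  · exfalso
    apply hd
    rw [← Matrix.exists_mulVec_eq_zero_iff]
    exact ⟨x, hx, (hM.dotProduct_mulVec_zero_iff x).mp h.symm⟩

lemma conj_diag_mulVec (U : Matrix (Fin n) (Fin n) ℝ) (hU : star U * U = 1)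
    (d : Fin n → ℝ) (i : Fin n) :
    (U * diagonal d * star U) *ᵥ (U *ᵥ Pi.single i 1) = d i • (U *ᵥ Pi.single i 1) := by
  rw [mulVec_mulVec, mul_assoc (U * diagonal d), hU, mul_one, ← mulVec_mulVec,
    diagonal_mulVec_single, mul_one]
  have h : (Pi.single i (d i) : Fin n → ℝ) = d i • (Pi.single i 1 : Fin n → ℝ) := by
    ext k
    by_cases hk : k = i
    · subst hk; simp
    · simp [Pi.single_apply, hk]
  rw [h, mulVec_smul]

lemma conj_vec_ne_zero (U : Matrix (Fin n) (Fin n) ℝ) (hU : star U * U = 1) (i : Fin n) :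
    U *ᵥ Pi.single i 1 ≠ 0 := by
  intro h
  have h2 : star U *ᵥ (U *ᵥ Pi.single i 1) = (0 : Fin n → ℝ) := by rw [h, mulVec_zero]
  rw [mulVec_mulVec, hU, one_mulVec] at h2
  have := congrFun h2 i
  simp at this

lemma diag_comb (a b : ℝ) (d e : Fin n → ℝ) :
    a • diagonal d + b • diagonal e = diagonal (fun j => a * d j + b * e j) := by
  ext j k
  by_cases h : j = k
  · subst h; simp [Matrix.diagonal_apply_eq]
  · simp [Matrix.diagonal_apply_ne _ h]

lemma conj_comb (U : Matrix (Fin n) (Fin n) ℝ) (a b : ℝ) (d e : Fin n → ℝ) :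
    a • (U * diagonal d * star U) + b • (U * diagonal e * star U)
      = U * diagonal (fun j => a * d j + b * e j) * star U := by
  rw [← diag_comb a b d e, mul_add, add_mul, Matrix.mul_smul, Matrix.smul_mul,
    Matrix.mul_smul, Matrix.smul_mul]

end Stmt10Aux

open Stmt10Aux Polynomial

/-- Let `T : Sₙ(ℝ) → Sₙ(ℝ)` be linear and preserve positive definiteness.
Then `T(A)` positive definite implies `A` positive definite (for all `A`) if and only if
`det T(A) ≠ 0` implies `det A ≠ 0` (for all `A`), i.e. `T` preserves singularity. -/
theorem stmt10 (n : ℕ) (T : SymMat n →ₗ[ℝ] SymMat n)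
    (hT : ∀ A : SymMat n, (A : Matrix (Fin n) (Fin n) ℝ).PosDef →
      ((T A : Matrix (Fin n) (Fin n) ℝ)).PosDef) :
    (∀ A : SymMat n, ((T A : Matrix (Fin n) (Fin n) ℝ)).PosDef →
        (A : Matrix (Fin n) (Fin n) ℝ).PosDef) ↔
    (∀ A : SymMat n, ((T A : Matrix (Fin n) (Fin n) ℝ)).det ≠ 0 →
        (A : Matrix (Fin n) (Fin n) ℝ).det ≠ 0) := by
  classical
  have one_mem : (1 : Matrix (Fin n) (Fin n) ℝ) ∈ SymMat n := Matrix.isSymm_one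
  set I1 : SymMat n := ⟨1, one_mem⟩ with hI1
  have hI1pd : ((I1 : Matrix (Fin n) (Fin n) ℝ)).PosDef := Matrix.PosDef.one
  have hT1 : ((T I1 : Matrix (Fin n) (Fin n) ℝ)).PosDef := hT I1 hI1pd
  constructor
  · -- (i) → (ii)
    intro hi A hdTA
    intro hdA
    have hH : (A : Matrix (Fin n) (Fin n) ℝ).IsHermitian := isHermitian_of_isSymm A.2
    set U : Matrix (Fin n) (Fin n) ℝ := (hH.eigenvectorUnitary : Matrix (Fin n) (Fin n) ℝ)
      with hUdef
    have hUU : star U * U = 1 := mem_unitaryGroup_iff'.mp hH.eigenvectorUnitary.2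
    have hspec : (A : Matrix (Fin n) (Fin n) ℝ) = U * diagonal hH.eigenvalues * star U := by
      have := hH.spectral_theorem
      simpa [RCLike.ofReal_real_eq_id] using this
    obtain ⟨i, hμi⟩ : ∃ i, hH.eigenvalues i = 0 := by
      have h := hH.det_eq_prod_eigenvalues
      rw [hdA] at h
      obtain ⟨i, -, hi0⟩ := Finset.prod_eq_zero_iff.mp h.symm
      exact ⟨i, by simpa using hi0⟩
    set c : Fin n → ℝ := fun j => max (-(hH.eigenvalues j)) 0 with hc
    have hcnn : ∀ j, 0 ≤ c j := fun j => le_max_right _ _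
    have hChm : (U * diagonal c * star U).IsHermitian := by
      rw [star_eq_conjTranspose]
      exact isHermitian_mul_mul_conjTranspose U (isHermitian_diagonal_of_self_adjoint _ rfl)
    have hCmem : U * diagonal c * star U ∈ SymMat n := isSymm_of_isHermitian hChm
    set Csub : SymMat n := ⟨U * diagonal c * star U, hCmem⟩ with hCsub
    have hCcoe : (Csub : Matrix (Fin n) (Fin n) ℝ) = U * diagonal c * star U := rfl
    -- key singularity fact on [1,2]
    have key : ∀ u : ℝ, u ∈ Set.Icc (1:ℝ) 2 →
        ((T A : Matrix (Fin n) (Fin n) ℝ) + u • (T Csub : Matrix (Fin n) (Fin n) ℝ)).det = 0 := by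
      intro u hu
      set M : SymMat n := A + u • Csub with hM
      have hTlin : ((T M : Matrix (Fin n) (Fin n) ℝ)) =
          (T A : Matrix (Fin n) (Fin n) ℝ) + u • (T Csub : Matrix (Fin n) (Fin n) ℝ) := by
        rw [hM, map_add, LinearMap.map_smul, Submodule.coe_add, Submodule.coe_smul]
      have hMcoe : (M : Matrix (Fin n) (Fin n) ℝ)
          = U * diagonal (fun j => hH.eigenvalues j + u * c j) * star U := by
        rw [hM, Submodule.coe_add, Submodule.coe_smul, hCcoe]
        conv_lhs => rw [hspec]
        have h := conj_comb U 1 u hH.eigenvalues c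
        rw [one_smul] at h
        rw [h]
        simp
      have hMpsd : (M : Matrix (Fin n) (Fin n) ℝ).PosSemidef := by
        rw [hMcoe, star_eq_conjTranspose]
        refine (Matrix.PosSemidef.diagonal ?_).mul_mul_conjTranspose_same U
        intro j
        show (0:ℝ) ≤ hH.eigenvalues j + u * c j
        rcases le_or_gt 0 (hH.eigenvalues j) with h | h
        · have h2 := mul_nonneg (by linarith [hu.1] : (0:ℝ) ≤ u) (hcnn j)
          linarith
        · have hcj : c j = -(hH.eigenvalues j) := max_eq_left (by linarith)
          rw [hcj]
          have h2 := mul_nonneg (sub_nonneg.2 hu.1) (neg_nonneg.2 h.le)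
          nlinarith
      have hMdet : (M : Matrix (Fin n) (Fin n) ℝ).det = 0 := by
        rw [← Matrix.exists_mulVec_eq_zero_iff]
        refine ⟨U *ᵥ Pi.single i 1, conj_vec_ne_zero U hUU i, ?_⟩
        rw [hMcoe, conj_diag_mulVec U hUU _ i]
        have hci : c i = 0 := by rw [hc]; simp [hμi]
        have hz : hH.eigenvalues i + u * c i = 0 := by rw [hμi, hci]; ring
        show (hH.eigenvalues i + u * c i) • _ = _
        rw [hz, zero_smul]
      have hTMpsd : ((T M : Matrix (Fin n) (Fin n) ℝ)).PosSemidef := by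
        refine Matrix.PosSemidef.of_dotProduct_mulVec_nonneg (isHermitian_of_isSymm (T M).2) (fun x => ?_)
        by_cases hx : x = 0
        · simp [hx]
        refine nonneg_of_forall_pos _ ((star x) ⬝ᵥ ((T I1 : Matrix (Fin n) (Fin n) ℝ) *ᵥ x))
          (fun s hs => ?_)
        have hMs : ((M + s • I1 : SymMat n) : Matrix (Fin n) (Fin n) ℝ).PosDef := by
          rw [Submodule.coe_add, Submodule.coe_smul]
          exact Matrix.PosDef.posSemidef_add hMpsd (posDef_smul hI1pd hs)
        have hTMs := hT _ hMs
        have hTMslin : ((T (M + s • I1) : Matrix (Fin n) (Fin n) ℝ)) =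
            (T M : Matrix (Fin n) (Fin n) ℝ) + s • (T I1 : Matrix (Fin n) (Fin n) ℝ) := by
          rw [map_add, LinearMap.map_smul, Submodule.coe_add, Submodule.coe_smul]
        rw [hTMslin] at hTMs
        have hq := hTMs.dotProduct_mulVec_pos hx
        rw [add_mulVec, dotProduct_add, smul_mulVec, dotProduct_smul, smul_eq_mul] at hq
        linarith
      have hTMdet : ((T M : Matrix (Fin n) (Fin n) ℝ)).det = 0 := by
        by_contra hd
        have hpd := hi M (posDef_of_posSemidef_det_ne_zero hTMpsd hd)
        exact hpd.det_pos.ne' hMdet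
      rwa [hTlin] at hTMdet
    -- polynomial argument
    set N : Matrix (Fin n) (Fin n) ℝ[X] :=
      (T A : Matrix (Fin n) (Fin n) ℝ).map Polynomial.C
        + (T Csub : Matrix (Fin n) (Fin n) ℝ).map (fun r => Polynomial.C r * Polynomial.X)
      with hN
    set p : ℝ[X] := N.det with hp
    have hpev : ∀ u : ℝ, p.eval u =
        ((T A : Matrix (Fin n) (Fin n) ℝ) + u • (T Csub : Matrix (Fin n) (Fin n) ℝ)).det := by
      intro u
      have h1 := RingHom.map_det (Polynomial.evalRingHom u) N
      rw [RingHom.mapMatrix_apply] at h1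
      have h2 : N.map (Polynomial.evalRingHom u) =
          (T A : Matrix (Fin n) (Fin n) ℝ) + u • (T Csub : Matrix (Fin n) (Fin n) ℝ) := by
        ext a b
        simp only [hN, Matrix.map_apply, Matrix.add_apply, Matrix.smul_apply,
          Polynomial.coe_evalRingHom, Polynomial.eval_add, Polynomial.eval_mul,
          Polynomial.eval_C, Polynomial.eval_X, smul_eq_mul]
        ring
      rw [h2] at h1
      simpa using h1
    have hsub : Set.Icc (1:ℝ) 2 ⊆ {x | p.IsRoot x} := by
      intro u hu
      have : p.eval u = 0 := by rw [hpev u]; exact key u hu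
      exact this
    have hp0 : p = 0 :=
      Polynomial.eq_zero_of_infinite_isRoot p
        (Set.Infinite.mono hsub (Set.Icc_infinite (by norm_num : (1:ℝ) < 2)))
    have hTA0 : ((T A : Matrix (Fin n) (Fin n) ℝ)).det = 0 := by
      have h := hpev 0
      rw [hp0] at h
      simpa using h.symm
    exact hdTA hTA0
  · -- (ii) → (i)
    intro hii A hTA
    have hH : (A : Matrix (Fin n) (Fin n) ℝ).IsHermitian := isHermitian_of_isSymm A.2
    set U : Matrix (Fin n) (Fin n) ℝ := (hH.eigenvectorUnitary : Matrix (Fin n) (Fin n) ℝ)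
      with hUdef
    have hUU : star U * U = 1 := mem_unitaryGroup_iff'.mp hH.eigenvectorUnitary.2
    have hspec : (A : Matrix (Fin n) (Fin n) ℝ) = U * diagonal hH.eigenvalues * star U := by
      have := hH.spectral_theorem
      simpa [RCLike.ofReal_real_eq_id] using this
    have hpos : ∀ i, 0 < hH.eigenvalues i := by
      intro i
      by_contra hle
      push_neg at hle
      have h1μ : 0 < 1 - hH.eigenvalues i := by linarith
      set t : ℝ := 1 / (1 - hH.eigenvalues i) with ht
      have ht0 : 0 < t := by positivity
      have ht1 : t ≤ 1 := by
        rw [ht, div_le_one h1μ]; linarith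
      set B : SymMat n := (1 - t) • I1 + t • A with hB
      have hTBpd : ((T B : Matrix (Fin n) (Fin n) ℝ)).PosDef := by
        have hlin : ((T B : Matrix (Fin n) (Fin n) ℝ)) =
            (1 - t) • (T I1 : Matrix (Fin n) (Fin n) ℝ)
              + t • (T A : Matrix (Fin n) (Fin n) ℝ) := by
          rw [hB, map_add, LinearMap.map_smul, LinearMap.map_smul, Submodule.coe_add,
            Submodule.coe_smul, Submodule.coe_smul]
        rw [hlin]
        exact Matrix.PosDef.posSemidef_add
          (posSemidef_smul hT1.posSemidef (by linarith)) (posDef_smul hTA ht0)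
      have hBcoe : ((B : Matrix (Fin n) (Fin n) ℝ)) =
          U * diagonal (fun j => (1 - t) * 1 + t * hH.eigenvalues j) * star U := by
        have hUU' : U * star U = 1 := mem_unitaryGroup_iff.mp hH.eigenvectorUnitary.2
        have hI1coe : ((I1 : Matrix (Fin n) (Fin n) ℝ))
            = U * diagonal (fun _ : Fin n => (1:ℝ)) * star U := by
          rw [show (diagonal fun _ : Fin n => (1:ℝ)) = 1 from Matrix.diagonal_one, mul_one, hUU']
        rw [hB, Submodule.coe_add, Submodule.coe_smul, Submodule.coe_smul, hI1coe]
        conv_lhs => rw [hspec]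
        exact conj_comb U (1 - t) t _ _
      have hdB : ((B : Matrix (Fin n) (Fin n) ℝ)).det = 0 := by
        rw [← Matrix.exists_mulVec_eq_zero_iff]
        refine ⟨U *ᵥ Pi.single i 1, conj_vec_ne_zero U hUU i, ?_⟩
        rw [hBcoe, conj_diag_mulVec U hUU _ i]
        have hz : (1 - t) * 1 + t * hH.eigenvalues i = 0 := by
          rw [ht]; field_simp; ring
        show ((1 - t) * 1 + t * hH.eigenvalues i) • _ = _
        rw [hz, zero_smul]
      exact hii B hTBpd.det_pos.ne' hdB
    have hpsd : (A : Matrix (Fin n) (Fin n) ℝ).PosSemidef :=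
      hH.posSemidef_iff_eigenvalues_nonneg.mpr (fun i => (hpos i).le)
    have hdet : (A : Matrix (Fin n) (Fin n) ℝ).det ≠ 0 := by
      rw [hH.det_eq_prod_eigenvalues]
      have h : (0:ℝ) < ∏ i, hH.eigenvalues i := Finset.prod_pos (fun i _ => hpos i)
      simpa using h.ne'
    exact posDef_of_posSemidef_det_ne_zero hpsd hdet
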